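/- Let L, μ > 0 with L/μ > 2, let n ≥ 1, set L̂ = √(L²/2 − μ²), and define f̂_i : ℝ^n × ℝ^n → ℝ by f̂_i(x, y) = (μ/2)‖x‖² + (√n·L̂/2)(x_i − 1)² − (μ/2)‖y‖² − (√n·L̂/2)(y_i − 1)², and f̂ = (1/n)∑_{i=1}^n f̂_i. Then: (i) f̂ is (μ, μ)-convex-concave; (ii) the family {f̂_i}_{i=1}^n is L-average smooth; (iii) the saddle point of f̂ over ℝ^n × ℝ^n is x* = y* = (L̂/(L̂ + √n·μ))·𝟙, where 𝟙 is the all-ones vector; and (iv) for any (x, y) ∈ ℝ^n × ℝ^n such that both x and y lie in the span of at most n/2 standard basis vectors, ‖x − x*‖² + ‖y − y*‖² ≥ 1/8. -/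

import Mathlib

open scoped Gradient

lemma esq {m : ℕ} (v : EuclideanSpace ℝ (Fin m)) : ‖v‖^2 = ∑ i, (v i)^2 := by
  rw [EuclideanSpace.norm_eq, Real.sq_sqrt (by positivity)]
  simp [sq_abs]

lemma esq' {m : ℕ} (v w : EuclideanSpace ℝ (Fin m)) : ‖v - w‖^2 = ∑ i, (v i - w i)^2 := by
  rw [EuclideanSpace.norm_eq, Real.sq_sqrt (by positivity)]
  simp [sq_abs]

lemma norm_comb {n : ℕ} (c d : ℝ) (v : EuclideanSpace ℝ (Fin n)) (i : Fin n) :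
    ‖c • v + d • EuclideanSpace.single i (1:ℝ)‖^2
      = c^2*‖v‖^2 + 2*c*d*(v i) + d^2 := by
  rw [norm_add_sq_real]
  rw [norm_smul, norm_smul, real_inner_smul_left, real_inner_smul_right,
    EuclideanSpace.inner_single_right, EuclideanSpace.norm_single]
  simp [mul_pow, sq_abs]
  ring

lemma hasGradientAt_aux {n : ℕ} (a b C₁ C₂ : ℝ) (i : Fin n) (x : EuclideanSpace ℝ (Fin n)) :
    HasGradientAt (fun u : EuclideanSpace ℝ (Fin n) => a * ‖u‖ ^ 2 + b * (u i - 1) ^ 2 - C₁ - C₂)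
      ((2*a) • x + (2 * b * (x i - 1)) • EuclideanSpace.single i 1) x := by
  have h0 : HasFDerivAt (fun u : EuclideanSpace ℝ (Fin n) => ‖u‖^2)
      ((fderivInnerCLM ℝ (x, x)).comp ((ContinuousLinearMap.id ℝ _).prod (ContinuousLinearMap.id ℝ _))) x := by
    have h := (hasFDerivAt_id x).inner ℝ (hasFDerivAt_id x)
    exact h.congr_of_eventuallyEq (Filter.Eventually.of_forall fun u =>
      (real_inner_self_eq_norm_sq u).symm)
  have hp : HasFDerivAt (fun u : EuclideanSpace ℝ (Fin n) => u i - 1)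
      (EuclideanSpace.proj i : EuclideanSpace ℝ (Fin n) →L[ℝ] ℝ) x :=
    ((EuclideanSpace.proj i : EuclideanSpace ℝ (Fin n) →L[ℝ] ℝ).hasFDerivAt (x := x)).sub_const 1
  have h2 : HasFDerivAt (fun u : EuclideanSpace ℝ (Fin n) => (u i - 1)^2)
      ((2 * (x i - 1)) • (EuclideanSpace.proj i : EuclideanSpace ℝ (Fin n) →L[ℝ] ℝ)) x := by
    simp only [pow_two]
    exact (hp.mul hp).congr_fderiv (by ext u; simp; ring)
  have h3 := (((h0.const_mul a).add (h2.const_mul b)).sub_const C₁).sub_const C₂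
  rw [hasGradientAt_iff_hasFDerivAt]
  refine h3.congr_fderiv ?_
  ext u
  simp [fderivInnerCLM_apply, InnerProductSpace.toDual_apply_apply, inner_add_left,
    real_inner_smul_left, EuclideanSpace.inner_single_left, real_inner_comm]
  have : ∑ j : Fin n, u j * x j = ∑ j : Fin n, x j * u j :=
    Finset.sum_congr rfl fun j _ => mul_comm _ _
  ring

lemma hasGradientAt_aux2 {n : ℕ} (a b C : ℝ) (i : Fin n) (y : EuclideanSpace ℝ (Fin n)) :
    HasGradientAt (fun v : EuclideanSpace ℝ (Fin n) => C - a * ‖v‖ ^ 2 - b * (v i - 1) ^ 2)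
      (-((2*a) • y + (2 * b * (y i - 1)) • EuclideanSpace.single i 1)) y := by
  have h := (hasGradientAt_aux a b C 0 i y).hasFDerivAt
  have h2 : HasFDerivAt (fun v : EuclideanSpace ℝ (Fin n) => C - a * ‖v‖ ^ 2 - b * (v i - 1) ^ 2)
      (-((InnerProductSpace.toDual ℝ _) ((2*a) • y + (2 * b * (y i - 1)) • EuclideanSpace.single i 1))) y := by
    have hneg := h.neg
    refine (hneg.congr_of_eventuallyEq (Filter.Eventually.of_forall fun v => ?_)).congr_fderiv rfl
    rw [Pi.neg_apply]; ring
  rw [hasGradientAt_iff_hasFDerivAt]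
  exact h2.congr_fderiv (by rw [map_neg])

lemma hkey {n : ℕ} (hn : 1 ≤ n) (μ κ : ℝ) (x y : EuclideanSpace ℝ (Fin n)) :
    (n:ℝ)⁻¹ * ∑ i, (μ/2*‖x‖^2 + κ*(x i - 1)^2 - μ/2*‖y‖^2 - κ*(y i - 1)^2)
      = (μ/2*‖x‖^2 + (n:ℝ)⁻¹ * ∑ i, κ*(x i - 1)^2)
        - (μ/2*‖y‖^2 + (n:ℝ)⁻¹ * ∑ i, κ*(y i - 1)^2) := by
  have hn' : (0:ℕ) < n := hn
  have hn0 : (n:ℝ) ≠ 0 := by positivity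
  have hb : ∀ i : Fin n, (μ/2*‖x‖^2 + κ*(x i - 1)^2 - μ/2*‖y‖^2 - κ*(y i - 1)^2)
      = (μ/2*‖x‖^2 - μ/2*‖y‖^2) + (κ*(x i - 1)^2 - κ*(y i - 1)^2) := fun i => by ring
  rw [Finset.sum_congr rfl fun i _ => hb i, Finset.sum_add_distrib, Finset.sum_const,
    Finset.sum_sub_distrib, Finset.card_univ, Fintype.card_fin, nsmul_eq_mul]
  field_simp
  ring

lemma hQconv {n : ℕ} (κ : ℝ) (hκ : 0 ≤ κ) :
    ConvexOn ℝ Set.univ (fun x : EuclideanSpace ℝ (Fin n) => (n:ℝ)⁻¹ * ∑ i, κ*(x i - 1)^2) := by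
  refine ⟨convex_univ, fun p _ q _ s t hs ht hst => ?_⟩
  simp only [smul_eq_mul]
  have h1 : ∀ i : Fin n, κ*(((s • p + t • q) i) - 1)^2
      ≤ s*(κ*(p i - 1)^2) + t*(κ*(q i - 1)^2) := by
    intro i
    have he : (s • p + t • q) i = s * p i + t * q i := rfl
    rw [he]
    have ht' : t = 1 - s := by linarith
    subst ht'
    nlinarith [mul_nonneg (mul_nonneg hκ hs) (mul_nonneg ht (sq_nonneg (p i - q i)))]
  have h2 : ∑ i, κ*(((s • p + t • q) i) - 1)^2
      ≤ ∑ i, (s*(κ*(p i - 1)^2) + t*(κ*(q i - 1)^2)) := Finset.sum_le_sum fun i _ => h1 i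
  have h3 := mul_le_mul_of_nonneg_left h2 (by positivity : (0:ℝ) ≤ (n:ℝ)⁻¹)
  refine le_of_le_of_eq h3 ?_
  rw [Finset.sum_add_distrib,
    show ∑ i, s*(κ*(p i - 1)^2) = s * ∑ i, κ*(p i - 1)^2 from (Finset.mul_sum _ _ _).symm,
    show ∑ i, t*(κ*(q i - 1)^2) = t * ∑ i, κ*(q i - 1)^2 from (Finset.mul_sum _ _ _).symm]
  ring

set_option maxHeartbeats 2000000 in
theorem hard_instance_small_condition_number
    {n : ℕ} (hn : 1 ≤ n) (L μ : ℝ) (hμ : 0 < μ) (hL : 0 < L) (hcond : L / μ > 2)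
    (Lh : ℝ) (hLh : Lh = Real.sqrt (L ^ 2 / 2 - μ ^ 2))
    (f : Fin n → EuclideanSpace ℝ (Fin n) → EuclideanSpace ℝ (Fin n) → ℝ)
    (hf : f = fun i x y =>
      μ / 2 * ‖x‖ ^ 2 + Real.sqrt n * Lh / 2 * (x i - 1) ^ 2
        - μ / 2 * ‖y‖ ^ 2 - Real.sqrt n * Lh / 2 * (y i - 1) ^ 2)
    (F : EuclideanSpace ℝ (Fin n) → EuclideanSpace ℝ (Fin n) → ℝ)
    (hF : F = fun x y => (n : ℝ)⁻¹ * ∑ i, f i x y)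
    (xs ys : EuclideanSpace ℝ (Fin n))
    (hxs : xs = fun (_ : Fin n) => Lh / (Lh + Real.sqrt n * μ))
    (hys : ys = fun (_ : Fin n) => Lh / (Lh + Real.sqrt n * μ)) :
    (∀ y : EuclideanSpace ℝ (Fin n), StrongConvexOn Set.univ μ (fun x => F x y)) ∧
    (∀ x : EuclideanSpace ℝ (Fin n), StrongConcaveOn Set.univ μ (F x)) ∧
    (∀ x x' y y' : EuclideanSpace ℝ (Fin n),
      (n : ℝ)⁻¹ * ∑ i,
          (‖gradient (fun u => f i u y) x - gradient (fun u => f i u y') x'‖ ^ 2 +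
            ‖gradient (fun v => f i x v) y - gradient (fun v => f i x' v) y'‖ ^ 2)
        ≤ L ^ 2 * (‖x - x'‖ ^ 2 + ‖y - y'‖ ^ 2)) ∧
    (∀ x y : EuclideanSpace ℝ (Fin n), F xs y ≤ F xs ys ∧ F xs ys ≤ F x ys) ∧
    (∀ (S : Finset (Fin n)), 2 * S.card ≤ n →
      ∀ x y : EuclideanSpace ℝ (Fin n),
        (∀ i ∉ S, x i = 0) → (∀ i ∉ S, y i = 0) →
        ‖x - xs‖ ^ 2 + ‖y - ys‖ ^ 2 ≥ 1 / 8) := by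
  have hyx : ys = xs := congrArg (WithLp.toLp 2) (hys.trans hxs.symm)
  subst hyx
  have hn' : (0:ℕ) < n := hn
  have hnR : (0:ℝ) < n := by exact_mod_cast hn'
  have hn0 : (n:ℝ) ≠ 0 := ne_of_gt hnR
  have hsn2 : Real.sqrt (n:ℝ) ^ 2 = (n:ℝ) := Real.sq_sqrt (le_of_lt hnR)
  have hsn0 : 0 < Real.sqrt (n:ℝ) := Real.sqrt_pos.2 hnR
  have hsn1 : (1:ℝ) ≤ Real.sqrt (n:ℝ) := by
    have h1 : (1:ℝ) ≤ (n:ℝ) := by exact_mod_cast hn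
    nlinarith [hsn2, hsn0]
  have hμL : 2*μ < L := by
    rw [gt_iff_lt, lt_div_iff₀ hμ] at hcond
    linarith
  have hnn : (0:ℝ) ≤ L^2/2 - μ^2 := by nlinarith
  have hL2 : Lh^2 = L^2/2 - μ^2 := by rw [hLh]; exact Real.sq_sqrt hnn
  have hLh0 : 0 ≤ Lh := by rw [hLh]; exact Real.sqrt_nonneg _
  have hμLh : μ < Lh := by nlinarith
  have hLhpos : 0 < Lh := lt_trans hμ hμLh
  set κ : ℝ := Real.sqrt (n:ℝ) * Lh / 2 with hκdef
  have hκ0 : 0 ≤ κ := by positivity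
  simp only [hF, hf]
  refine ⟨?_, ?_, ?_, ?_, ?_⟩
  · -- strong convexity in x
    intro y
    rw [strongConvexOn_iff_convex]
    have heq : (fun x : EuclideanSpace ℝ (Fin n) =>
        (n:ℝ)⁻¹ * ∑ i, (μ/2*‖x‖^2 + κ*(x i - 1)^2 - μ/2*‖y‖^2 - κ*(y i - 1)^2)
          - μ/2*‖x‖^2)
        = fun x : EuclideanSpace ℝ (Fin n) =>
          ((n:ℝ)⁻¹ * ∑ i, κ*(x i - 1)^2)
            + (-(μ/2*‖y‖^2 + (n:ℝ)⁻¹ * ∑ i, κ*(y i - 1)^2)) := by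
      funext x
      rw [hkey hn μ κ x y]
      ring
    rw [heq]
    exact (hQconv κ hκ0).add (convexOn_const _ convex_univ)
  · -- strong concavity in y
    intro x
    rw [strongConcaveOn_iff_convex]
    have heq : (fun y : EuclideanSpace ℝ (Fin n) =>
        (n:ℝ)⁻¹ * ∑ i, (μ/2*‖x‖^2 + κ*(x i - 1)^2 - μ/2*‖y‖^2 - κ*(y i - 1)^2)
          + μ/2*‖y‖^2)
        = fun y : EuclideanSpace ℝ (Fin n) =>
          -(((n:ℝ)⁻¹ * ∑ i, κ*(y i - 1)^2)
            + (-(μ/2*‖x‖^2 + (n:ℝ)⁻¹ * ∑ i, κ*(x i - 1)^2))) := by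
      funext y
      rw [hkey hn μ κ x y]
      ring
    rw [heq]
    exact ((hQconv κ hκ0).add (convexOn_const _ convex_univ)).neg
  · -- average smoothness
    intro x x' y y'
    have hterm : ∀ i : Fin n,
        ‖gradient (fun u : EuclideanSpace ℝ (Fin n) =>
            μ/2*‖u‖^2 + κ*(u i - 1)^2 - μ/2*‖y‖^2 - κ*(y i - 1)^2) x
          - gradient (fun u : EuclideanSpace ℝ (Fin n) =>
            μ/2*‖u‖^2 + κ*(u i - 1)^2 - μ/2*‖y'‖^2 - κ*(y' i - 1)^2) x'‖^2
        + ‖gradient (fun v : EuclideanSpace ℝ (Fin n) =>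
            μ/2*‖x‖^2 + κ*(x i - 1)^2 - μ/2*‖v‖^2 - κ*(v i - 1)^2) y
          - gradient (fun v : EuclideanSpace ℝ (Fin n) =>
            μ/2*‖x'‖^2 + κ*(x' i - 1)^2 - μ/2*‖v‖^2 - κ*(v i - 1)^2) y'‖^2
        = (μ^2*‖x - x'‖^2 + (4*μ*κ + 4*κ^2)*(x i - x' i)^2)
          + (μ^2*‖y - y'‖^2 + (4*μ*κ + 4*κ^2)*(y i - y' i)^2) := by
      intro i
      rw [(hasGradientAt_aux (μ/2) κ (μ/2*‖y‖^2) (κ*(y i - 1)^2) i x).gradient,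
        (hasGradientAt_aux (μ/2) κ (μ/2*‖y'‖^2) (κ*(y' i - 1)^2) i x').gradient,
        (hasGradientAt_aux2 (μ/2) κ (μ/2*‖x‖^2 + κ*(x i - 1)^2) i y).gradient,
        (hasGradientAt_aux2 (μ/2) κ (μ/2*‖x'‖^2 + κ*(x' i - 1)^2) i y').gradient]
      rw [show (2*(μ/2)) • x + (2*κ*(x i - 1)) • EuclideanSpace.single i (1:ℝ)
          - ((2*(μ/2)) • x' + (2*κ*(x' i - 1)) • EuclideanSpace.single i 1)
          = μ • (x - x') + (2*κ*(x i - x' i)) • EuclideanSpace.single i 1 by module]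
      rw [show -((2*(μ/2)) • y + (2*κ*(y i - 1)) • EuclideanSpace.single i (1:ℝ))
          - -((2*(μ/2)) • y' + (2*κ*(y' i - 1)) • EuclideanSpace.single i 1)
          = -(μ • (y - y') + (2*κ*(y i - y' i)) • EuclideanSpace.single i 1) by module]
      rw [norm_neg, norm_comb, norm_comb]
      have e1 : (x - x') i = x i - x' i := rfl
      have e2 : (y - y') i = y i - y' i := rfl
      rw [e1, e2]; ring
    simp only [hterm]
    rw [Finset.sum_add_distrib, Finset.sum_add_distrib, Finset.sum_add_distrib,
      Finset.sum_const, Finset.sum_const, Finset.card_univ, Fintype.card_fin, nsmul_eq_mul, nsmul_eq_mul,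
      show ∑ i, (4*μ*κ + 4*κ^2)*(x i - x' i)^2
        = (4*μ*κ + 4*κ^2) * ∑ i, (x i - x' i)^2 from (Finset.mul_sum _ _ _).symm,
      show ∑ i, (4*μ*κ + 4*κ^2)*(y i - y' i)^2
        = (4*μ*κ + 4*κ^2) * ∑ i, (y i - y' i)^2 from (Finset.mul_sum _ _ _).symm,
      ← esq' x x', ← esq' y y']
    set A := ‖x - x'‖^2 with hA
    set B := ‖y - y'‖^2 with hB
    have hA0 : 0 ≤ A := by rw [hA]; positivity
    have hB0 : 0 ≤ B := by rw [hB]; positivity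
    have hLsq : L^2 = 2*μ^2 + 2*Lh^2 := by rw [hL2]; ring
    have hsz : Real.sqrt (n:ℝ) * (n:ℝ)⁻¹ ≤ 1 := by
      rw [← div_eq_mul_inv, div_le_one hnR]
      nlinarith [hsn2, hsn1]
    have hc1 : 4*κ^2 * (n:ℝ)⁻¹ = Lh^2 := by
      have hκ2 : κ^2 = (n:ℝ)*Lh^2/4 := by
        rw [hκdef]
        nlinarith [hsn2]
      rw [hκ2]
      field_simp
    have hc2 : 4*μ*κ*(n:ℝ)⁻¹ ≤ μ^2 + Lh^2 := by
      have e : 4*μ*κ*(n:ℝ)⁻¹ = 2*μ*Lh*(Real.sqrt (n:ℝ) * (n:ℝ)⁻¹) := by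
        rw [hκdef]; ring
      rw [e]
      have h1 : 2*μ*Lh*(Real.sqrt (n:ℝ) * (n:ℝ)⁻¹) ≤ 2*μ*Lh*1 :=
        mul_le_mul_of_nonneg_left hsz (by positivity)
      nlinarith [sq_nonneg (μ - Lh)]
    have e : (n:ℝ)⁻¹ * ((n:ℝ)*(μ^2*A) + (4*μ*κ + 4*κ^2)*A + ((n:ℝ)*(μ^2*B) + (4*μ*κ + 4*κ^2)*B))
        = μ^2*(A+B) + ((4*μ*κ*(n:ℝ)⁻¹) + (4*κ^2*(n:ℝ)⁻¹))*(A+B) := by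
      field_simp
    rw [e, hc1]
    have h2 := mul_le_mul_of_nonneg_right hc2 (add_nonneg hA0 hB0)
    nlinarith [h2, mul_nonneg (add_nonneg hA0 hB0) (sq_nonneg Lh)]
  · -- saddle point
    intro x y
    rw [hkey hn μ κ ys y, hkey hn μ κ ys ys, hkey hn μ κ x ys]
    set t : ℝ := Lh / (Lh + Real.sqrt (n:ℝ) * μ) with htdef
    have hden : 0 < Lh + Real.sqrt (n:ℝ) * μ := by positivity
    set κ' : ℝ := (n:ℝ)⁻¹ * κ with hκ'def
    have hκ'0 : 0 ≤ κ' := by positivity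
    have htc : (μ + 2*κ')*t = 2*κ' := by
      rw [htdef, hκ'def, hκdef]
      field_simp
      linear_combination (-μ) * hsn2
    have hsc : ∀ s : ℝ, μ/2*t^2 + κ'*(t - 1)^2 ≤ μ/2*s^2 + κ'*(s - 1)^2 := by
      intro s
      have hid : μ/2*s^2 + κ'*(s-1)^2 - (μ/2*t^2 + κ'*(t-1)^2)
          = (μ/2+κ')*(s-t)^2 + (s-t)*((μ+2*κ')*t - 2*κ') := by ring
      have h0 : (μ+2*κ')*t - 2*κ' = 0 := by rw [htc]; ring
      rw [h0, mul_zero, add_zero] at hid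
      nlinarith [mul_nonneg (add_nonneg (by positivity : (0:ℝ) ≤ μ/2) hκ'0) (sq_nonneg (s - t))]
    have hGsum : ∀ z : EuclideanSpace ℝ (Fin n),
        μ/2*‖z‖^2 + (n:ℝ)⁻¹ * ∑ i, κ*(z i - 1)^2
          = ∑ i, (μ/2*(z i)^2 + κ'*(z i - 1)^2) := by
      intro z
      rw [esq z, Finset.mul_sum, Finset.mul_sum, ← Finset.sum_add_distrib]
      exact Finset.sum_congr rfl fun i _ => by rw [hκ'def]; ring
    have hxsi : ∀ i : Fin n, ys i = t := by
      intro i; rw [hxs]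
    have hGmin : ∀ z : EuclideanSpace ℝ (Fin n),
        μ/2*‖ys‖^2 + (n:ℝ)⁻¹ * ∑ i, κ*(ys i - 1)^2
          ≤ μ/2*‖z‖^2 + (n:ℝ)⁻¹ * ∑ i, κ*(z i - 1)^2 := by
      intro z
      rw [hGsum ys, hGsum z]
      refine Finset.sum_le_sum fun i _ => ?_
      rw [hxsi i]
      exact hsc (z i)
    exact ⟨by linarith [hGmin y], by linarith [hGmin x]⟩
  · -- lower bound
    intro S hS x y hx hy
    set t : ℝ := Lh / (Lh + Real.sqrt (n:ℝ) * μ) with htdef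
    have hden : 0 < Lh + Real.sqrt (n:ℝ) * μ := by positivity
    have hxsi : ∀ i : Fin n, ys i = t := by
      intro i; rw [hxs]
    have hts : 1/(2*Real.sqrt (n:ℝ)) ≤ t := by
      have hden2 : Lh + Real.sqrt (n:ℝ) * μ ≤ 2*Real.sqrt (n:ℝ)*Lh := by
        nlinarith [mul_nonneg (sub_nonneg.2 hsn1) hLh0,
          mul_nonneg (le_of_lt hsn0) (sub_nonneg.2 hμLh.le)]
      have h1 : Lh / (2*Real.sqrt (n:ℝ)*Lh) ≤ Lh / (Lh + Real.sqrt (n:ℝ) * μ) :=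
        div_le_div_of_nonneg_left hLh0 hden hden2
      have h2 : Lh / (2*Real.sqrt (n:ℝ)*Lh) = 1/(2*Real.sqrt (n:ℝ)) := by
        field_simp
      rw [htdef, ← h2]
      exact h1
    have ht0 : 0 < t := lt_of_lt_of_le (by positivity) hts
    have ht2 : 1/(4*(n:ℝ)) ≤ t^2 := by
      have h1 : (1/(2*Real.sqrt (n:ℝ)))^2 ≤ t^2 := pow_le_pow_left₀ (by positivity) hts 2
      have h2 : (1/(2*Real.sqrt (n:ℝ)))^2 = 1/(4*(n:ℝ)) := by
        rw [div_pow, one_pow, mul_pow, hsn2]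
        norm_num
      rw [← h2]
      exact h1
    have hcard : ∀ z : EuclideanSpace ℝ (Fin n), (∀ i ∉ S, z i = 0) →
        ((n:ℝ) - S.card) * t^2 ≤ ∑ i : Fin n, (z i - ys i)^2 := by
      intro z hz
      have hsub : ∑ i ∈ Sᶜ, (z i - ys i)^2 ≤ ∑ i : Fin n, (z i - ys i)^2 :=
        Finset.sum_le_sum_of_subset_of_nonneg (Finset.subset_univ _) (fun i _ _ => sq_nonneg _)
      have hval : ∑ i ∈ Sᶜ, (z i - ys i)^2 = (Sᶜ.card : ℝ) * t^2 := by
        have hterm : ∀ i ∈ Sᶜ, (z i - ys i)^2 = t^2 := by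
          intro i hi
          rw [hz i (Finset.mem_compl.1 hi), hxsi i]
          ring
        rw [Finset.sum_congr rfl hterm, Finset.sum_const, nsmul_eq_mul]
      have hSn : S.card ≤ n := by omega
      have hcc : ((n:ℝ) - S.card) ≤ (Sᶜ.card : ℝ) := by
        rw [Finset.card_compl, Fintype.card_fin, Nat.cast_sub hSn]
      calc ((n:ℝ) - S.card) * t^2 ≤ (Sᶜ.card : ℝ) * t^2 :=
            mul_le_mul_of_nonneg_right hcc (sq_nonneg t)
        _ = ∑ i ∈ Sᶜ, (z i - ys i)^2 := hval.symm
        _ ≤ _ := hsub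
    have hx2 := hcard x hx
    have hy2 := hcard y hy
    rw [esq' x ys, esq' y ys]
    have hcS : ((n:ℝ)/2) ≤ (n:ℝ) - S.card := by
      have h := hS
      have h' : (2*(S.card:ℝ)) ≤ (n:ℝ) := by exact_mod_cast hS
      linarith
    have h3 : ((n:ℝ)/2) * t^2 ≤ ((n:ℝ) - S.card) * t^2 :=
      mul_le_mul_of_nonneg_right hcS (sq_nonneg t)
    have h5 : (n:ℝ) * (1/(4*(n:ℝ))) ≤ (n:ℝ) * t^2 :=
      mul_le_mul_of_nonneg_left ht2 (le_of_lt hnR)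
    have hnt : (n:ℝ) * (1/(4*(n:ℝ))) = 1/4 := by field_simp
    linarith
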